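/- For all m, n ≥ 1, a subset E of {0,…,m−1}×{0,…,n−1} is reachable if and only if there exist an integer k with k ≤ f(m,n) = 2^(mn−1) + 2^((m−1)(n−1))·(2^(m−1)−1)·(2^(n−1)−1) and a pair (Λ,P) ∈ U_{m,n}^(k) such that s(Λ,P) = E. -/

import Mathlib

open Finset

/-- `Π·h`: the vector whose `q`-th entry is the union of the `Π p` over all `p` with `h p = q`. -/
def dotAct {n : ℕ} (Pi : Fin n → Finset ℕ) (h : Fin n → Fin n) : Fin n → Finset ℕ :=
  fun q => (Finset.univ.filter (fun p => h p = q)).biUnion Pi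

/-- Entrywise union of two vectors of sets. -/
def vUnion {n : ℕ} (Pi Pi' : Fin n → Finset ℕ) : Fin n → Finset ℕ :=
  fun q => Pi q ∪ Pi' q

/-- `r = max (π₀ ∪ … ∪ π_{n−1})`. -/
def vMax {n : ℕ} (Pi : Fin n → Finset ℕ) : ℕ :=
  (Finset.univ.sup Pi).sup id

/-- `Π↑`: add `r = max (π₀ ∪ … ∪ π_{n−1})` to every element of every entry. -/
def vUp {n : ℕ} (Pi : Fin n → Finset ℕ) : Fin n → Finset ℕ :=
  fun q => (Pi q).image (· + vMax Pi)

/-- A `k`-EXPcomposition of size `n`: pairwise disjoint entries whose union is `{1,…,2^k}`. -/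
def IsEXP {n : ℕ} (k : ℕ) (Pi : Fin n → Finset ℕ) : Prop :=
  (∀ p q : Fin n, p ≠ q → Disjoint (Pi p) (Pi q)) ∧
    Finset.univ.sup Pi = Finset.Icc 1 (2 ^ k)

/-- A `k`-Rvalid vector of size `n`. -/
def IsRvalid {n : ℕ} (k : ℕ) (ρ : Fin n → Finset ℕ) : Prop :=
  IsEXP k ρ ∧ (∀ p : Fin n, p.val = 0 → 1 ∈ ρ p) ∧
    ∀ k' < k, ∀ i ∈ Finset.Icc 1 (2 ^ k'), ∀ j ∈ Finset.Icc 1 (2 ^ k'),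
      (∃ α, i ∈ ρ α ∧ j ∈ ρ α) → ∃ β, i + 2 ^ k' ∈ ρ β ∧ j + 2 ^ k' ∈ ρ β

/-- A `k`-Lvalid vector of size `m`. -/
def IsLvalid {m : ℕ} (k : ℕ) (lam : Fin m → Finset ℕ) : Prop :=
  IsEXP k lam ∧ (∀ p : Fin m, p.val = 0 → 2 ^ k ∈ lam p) ∧
    ∀ k' < k, ∀ i ∈ Finset.Icc 1 (2 ^ k'), ∀ j ∈ Finset.Icc 1 (2 ^ k'),
      (∃ α, 2 ^ k + 1 - i ∈ lam α ∧ 2 ^ k + 1 - j ∈ lam α) →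
        ∃ β, 2 ^ k + 1 - (i + 2 ^ k') ∈ lam β ∧ 2 ^ k + 1 - (j + 2 ^ k') ∈ lam β

/-- Number of nonempty entries of a vector of sets. -/
def nne {n : ℕ} (Pi : Fin n → Finset ℕ) : ℕ :=
  (Finset.univ.filter (fun q => Pi q ≠ ∅)).card

/-- `succ(P) = {P ∪ (P·g)↑ : g}`. -/
def succSet {n : ℕ} (P : Fin n → Finset ℕ) : Finset (Fin n → Finset ℕ) :=
  (Finset.univ : Finset (Fin n → Fin n)).image (fun g => vUnion P (vUp (dotAct P g)))

/-- The graded set `U_{m,n}^{(k)}` of U-pairs. -/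
def Uset (m n : ℕ) : ℕ → Set ((Fin m → Finset ℕ) × (Fin n → Finset ℕ))
  | 0 => {x | x = (fun p => if p.val = 0 then {1} else ∅,
                   fun q => if q.val = 0 then {1} else ∅)}
  | k + 1 => {x | ∃ L P, (L, P) ∈ Uset m n k ∧ ∃ (f : Fin m → Fin m) (g : Fin n → Fin n),
      x = (vUnion (dotAct L f) (vUp L), vUnion P (vUp (dotAct P g)))}

/-- The `r`-Stirling number: partitions of `{1,…,a}` into `b` nonempty blocks
with `1,…,r` in pairwise distinct blocks. -/
noncomputable def rStirling (a b r : ℕ) : ℕ :=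
  Set.ncard {C : Finset (Finset ℕ) |
    C.card = b ∧ (∅ ∉ C) ∧
    (∀ B ∈ C, ∀ B' ∈ C, B ≠ B' → Disjoint B B') ∧
    C.sup id = Finset.Icc 1 a ∧
    ∀ x ∈ Finset.Icc 1 r, ∀ y ∈ Finset.Icc 1 r, x ≠ y →
      ∀ B ∈ C, x ∈ B → y ∉ B}

/-- The Stirling number of the second kind: the number of partitions of an
`a`-element set into `b` nonempty blocks. -/
noncomputable def stirling2 (a b : ℕ) : ℕ := rStirling a b 0

/-- The entry `s_n^{(i,j)}` (with `1 ≤ i,j ≤ n`). -/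
noncomputable def sEntry (n i j : ℕ) : ℕ :=
  if i ≤ j then
    (j - i).factorial * Nat.choose (n - i) (j - i) *
      ∑ α ∈ Finset.Icc (j - i) i, Nat.choose i α * i ^ (i - α) * stirling2 α (j - i)
  else 0

/-- The matrix `S_n`, with rows and columns indexed by `{1,…,n}`. -/
noncomputable def Smat (n : ℕ) : Matrix (Fin n) (Fin n) ℕ :=
  fun i j => sEntry n (i.val + 1) (j.val + 1)

/-- One step of the shuffle-automaton action on subsets of the grid. -/
def stepE {m n : ℕ} (E : Finset (Fin m × Fin n)) (f : Fin m → Fin m) (g : Fin n → Fin n) :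
    Finset (Fin m × Fin n) :=
  E.image (fun p => (f p.1, p.2)) ∪ E.image (fun p => (p.1, g p.2))

/-- Reachability from `{(0,0)}` by finitely many steps. -/
def Reach {m n : ℕ} (hm : 0 < m) (hn : 0 < n) (E : Finset (Fin m × Fin n)) : Prop :=
  Relation.ReflTransGen (fun E1 E2 => ∃ f g, E2 = stepE E1 f g)
    {(⟨0, hm⟩, ⟨0, hn⟩)} E

/-- Reachability from `{(0,0)}` in at most `t` steps. -/
def ReachIn {m n : ℕ} (hm : 0 < m) (hn : 0 < n) :
    ℕ → Finset (Fin m × Fin n) → Prop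
  | 0, E => E = {(⟨0, hm⟩, ⟨0, hn⟩)}
  | t + 1, E => ReachIn hm hn t E ∨
      ∃ E' f g, ReachIn hm hn t E' ∧ E = stepE E' f g

/-- `s(Λ,P) = {(i,j) : λ_i ∩ ρ_j ≠ ∅}`. -/
def sTab {m n : ℕ} (L : Fin m → Finset ℕ) (P : Fin n → Finset ℕ) :
    Finset (Fin m × Fin n) :=
  Finset.univ.filter (fun p => (L p.1 ∩ P p.2).Nonempty)

section AuxStmt16

variable {m n : ℕ}

lemma sup_dotAct (L : Fin n → Finset ℕ) (f : Fin n → Fin n) :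
    Finset.univ.sup (dotAct L f) = Finset.univ.sup L := by
  ext x
  simp only [Finset.mem_sup, mem_univ, true_and, dotAct, Finset.mem_biUnion, mem_filter]
  constructor
  · rintro ⟨q, p, -, hx⟩
    exact ⟨p, hx⟩
  · rintro ⟨p, hx⟩
    exact ⟨f p, p, rfl, hx⟩

lemma sup_vUnion (A B : Fin n → Finset ℕ) :
    Finset.univ.sup (vUnion A B) = Finset.univ.sup A ∪ Finset.univ.sup B := by
  ext x
  simp only [Finset.mem_sup, mem_univ, true_and, vUnion, mem_union]
  constructor
  · rintro ⟨q, h | h⟩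
    · exact Or.inl ⟨q, h⟩
    · exact Or.inr ⟨q, h⟩
  · rintro (⟨q, h⟩ | ⟨q, h⟩)
    · exact ⟨q, Or.inl h⟩
    · exact ⟨q, Or.inr h⟩

lemma sup_vUp (A : Fin n → Finset ℕ) :
    Finset.univ.sup (vUp A) = (Finset.univ.sup A).image (· + vMax A) := by
  ext x
  simp only [Finset.mem_sup, mem_univ, true_and, vUp, mem_image]
  constructor
  · rintro ⟨q, y, hy, rfl⟩
    exact ⟨y, ⟨q, hy⟩, rfl⟩
  · rintro ⟨y, ⟨q, hy⟩, rfl⟩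
    exact ⟨q, y, hy, rfl⟩

lemma vMax_eq {k : ℕ} {A : Fin n → Finset ℕ}
    (h : Finset.univ.sup A = Finset.Icc 1 (2 ^ k)) : vMax A = 2 ^ k := by
  rw [vMax, h]
  apply le_antisymm
  · exact Finset.sup_le fun x hx => (Finset.mem_Icc.mp hx).2
  · exact Finset.le_sup (f := id) (Finset.mem_Icc.mpr ⟨Nat.one_le_two_pow, le_rfl⟩)

lemma icc_step {k : ℕ} :
    Finset.Icc 1 (2 ^ k) ∪ (Finset.Icc 1 (2 ^ k)).image (· + 2 ^ k)
      = Finset.Icc 1 (2 ^ (k + 1)) := by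
  ext x
  simp only [mem_union, mem_image, Finset.mem_Icc, pow_succ]
  constructor
  · rintro (⟨h1, h2⟩ | ⟨y, ⟨h1, h2⟩, rfl⟩) <;> constructor <;> omega
  · rintro ⟨h1, h2⟩
    by_cases hx : x ≤ 2 ^ k
    · exact Or.inl ⟨h1, hx⟩
    · exact Or.inr ⟨x - 2 ^ k, ⟨by omega, by omega⟩, by omega⟩

lemma supL_new {k : ℕ} {L : Fin m → Finset ℕ}
    (hL : Finset.univ.sup L = Finset.Icc 1 (2 ^ k)) (f : Fin m → Fin m) :
    Finset.univ.sup (vUnion (dotAct L f) (vUp L)) = Finset.Icc 1 (2 ^ (k + 1)) := by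
  rw [sup_vUnion, sup_dotAct, sup_vUp, hL, vMax_eq hL, icc_step]

lemma supP_new {k : ℕ} {P : Fin n → Finset ℕ}
    (hP : Finset.univ.sup P = Finset.Icc 1 (2 ^ k)) (g : Fin n → Fin n) :
    Finset.univ.sup (vUnion P (vUp (dotAct P g))) = Finset.Icc 1 (2 ^ (k + 1)) := by
  rw [sup_vUnion, sup_vUp, sup_dotAct, hP,
    vMax_eq ((sup_dotAct P g).trans hP), icc_step]

lemma mem_sTab {L : Fin m → Finset ℕ} {P : Fin n → Finset ℕ} {i : Fin m} {j : Fin n} :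
    (i, j) ∈ sTab L P ↔ ∃ x, x ∈ L i ∧ x ∈ P j := by
  simp [sTab, Finset.Nonempty, Finset.mem_inter]

end AuxStmt16
section AuxStmt16b

variable {m n : ℕ}

lemma uset_sup (hm : 0 < m) (hn : 0 < n) :
    ∀ k (L : Fin m → Finset ℕ) (P : Fin n → Finset ℕ),
    (L, P) ∈ Uset m n k →
    Finset.univ.sup L = Finset.Icc 1 (2 ^ k) ∧
      Finset.univ.sup P = Finset.Icc 1 (2 ^ k) := by
  intro k
  induction k with
  | zero =>
    intro L P hLP
    have hLP' : (L, P) = _ := hLP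
    rw [Prod.ext_iff] at hLP'
    obtain ⟨hL, hP⟩ := hLP'
    simp only at hL hP
    subst hL; subst hP
    have h1 : Finset.univ.sup (fun p : Fin m => if p.val = 0 then ({1} : Finset ℕ) else ∅)
        = {1} := by
      apply le_antisymm
      · apply Finset.sup_le
        intro p _
        split <;> simp
      · have := Finset.le_sup (f := fun p : Fin m => if p.val = 0 then ({1} : Finset ℕ) else ∅)
          (Finset.mem_univ (⟨0, hm⟩ : Fin m))
        simpa using this
    have h2 : Finset.univ.sup (fun q : Fin n => if q.val = 0 then ({1} : Finset ℕ) else ∅)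
        = {1} := by
      apply le_antisymm
      · apply Finset.sup_le
        intro p _
        split <;> simp
      · have := Finset.le_sup (f := fun q : Fin n => if q.val = 0 then ({1} : Finset ℕ) else ∅)
          (Finset.mem_univ (⟨0, hn⟩ : Fin n))
        simpa using this
    rw [h1, h2]
    constructor <;> · ext x; simp [Finset.mem_Icc]
  | succ k ih =>
    intro L P hLP
    obtain ⟨L0, P0, h0, f, g, hx⟩ := hLP
    rw [Prod.ext_iff] at hx
    obtain ⟨hL, hP⟩ := hx
    simp only at hL hP
    subst hL; subst hP
    obtain ⟨h1, h2⟩ := ih L0 P0 h0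
    exact ⟨supL_new h1 f, supP_new h2 g⟩

lemma sTab_step {k : ℕ} {L : Fin m → Finset ℕ} {P : Fin n → Finset ℕ}
    (hL : Finset.univ.sup L = Finset.Icc 1 (2 ^ k))
    (hP : Finset.univ.sup P = Finset.Icc 1 (2 ^ k))
    (f : Fin m → Fin m) (g : Fin n → Fin n) :
    sTab (vUnion (dotAct L f) (vUp L)) (vUnion P (vUp (dotAct P g)))
      = stepE (sTab L P) f g := by
  have hLmem : ∀ p x, x ∈ L p → 1 ≤ x ∧ x ≤ 2 ^ k := by
    intro p x hx
    have : x ∈ Finset.univ.sup L := Finset.mem_sup.mpr ⟨p, Finset.mem_univ p, hx⟩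
    rw [hL, Finset.mem_Icc] at this; exact this
  have hPmem : ∀ q x, x ∈ P q → 1 ≤ x ∧ x ≤ 2 ^ k := by
    intro q x hx
    have : x ∈ Finset.univ.sup P := Finset.mem_sup.mpr ⟨q, Finset.mem_univ q, hx⟩
    rw [hP, Finset.mem_Icc] at this; exact this
  have hdLmem : ∀ q x, x ∈ dotAct L f q → 1 ≤ x ∧ x ≤ 2 ^ k := by
    intro q x hx
    rw [dotAct, Finset.mem_biUnion] at hx
    obtain ⟨p, -, hp⟩ := hx
    exact hLmem p x hp
  have hdPmem : ∀ q x, x ∈ dotAct P g q → 1 ≤ x ∧ x ≤ 2 ^ k := by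
    intro q x hx
    rw [dotAct, Finset.mem_biUnion] at hx
    obtain ⟨p, -, hp⟩ := hx
    exact hPmem p x hp
  have hvL : vMax L = 2 ^ k := vMax_eq hL
  have hvdP : vMax (dotAct P g) = 2 ^ k := vMax_eq ((sup_dotAct P g).trans hP)
  ext ⟨i, j⟩
  rw [mem_sTab]
  simp only [stepE, Finset.mem_union, Finset.mem_image]
  constructor
  · rintro ⟨x, hx1, hx2⟩
    rw [vUnion, Finset.mem_union] at hx1 hx2
    rcases hx1 with h1 | h1 <;> rcases hx2 with h2 | h2
    · rw [dotAct, Finset.mem_biUnion] at h1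
      obtain ⟨p, hp, hxp⟩ := h1
      rw [Finset.mem_filter] at hp
      exact Or.inl ⟨(p, j), mem_sTab.mpr ⟨x, hxp, h2⟩, by rw [show f p = i from hp.2]⟩
    · exfalso
      rw [vUp, Finset.mem_image] at h2
      obtain ⟨y, hy, hyx⟩ := h2
      rw [hvdP] at hyx
      have hy' := hdPmem j y hy
      have hx' := hdLmem i x h1
      omega
    · exfalso
      rw [vUp, Finset.mem_image] at h1
      obtain ⟨y, hy, hyx⟩ := h1
      rw [hvL] at hyx
      have hy' := hLmem i y hy
      have hx' := hPmem j x h2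
      omega
    · rw [vUp, Finset.mem_image] at h1 h2
      obtain ⟨y, hy, hyx⟩ := h1
      obtain ⟨z, hz, hzx⟩ := h2
      rw [hvL] at hyx
      rw [hvdP] at hzx
      have hyz : y = z := by omega
      subst hyz
      rw [dotAct, Finset.mem_biUnion] at hz
      obtain ⟨q, hq, hzq⟩ := hz
      rw [Finset.mem_filter] at hq
      exact Or.inr ⟨(i, q), mem_sTab.mpr ⟨y, hy, hzq⟩, by rw [show g q = j from hq.2]⟩
  · rintro (⟨⟨p, q⟩, hpq, heq⟩ | ⟨⟨p, q⟩, hpq, heq⟩) <;>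
      obtain ⟨x, hxL, hxP⟩ := mem_sTab.mp hpq <;>
      rw [Prod.ext_iff] at heq <;> obtain ⟨e1, e2⟩ := heq <;> simp only at e1 e2
    · refine ⟨x, ?_, ?_⟩
      · rw [vUnion, Finset.mem_union]
        left
        rw [dotAct, Finset.mem_biUnion]
        exact ⟨p, Finset.mem_filter.mpr ⟨Finset.mem_univ p, e1⟩, hxL⟩
      · rw [vUnion, Finset.mem_union]
        left
        rw [← e2]; exact hxP
    · refine ⟨x + 2 ^ k, ?_, ?_⟩
      · rw [vUnion, Finset.mem_union]
        right
        rw [vUp, Finset.mem_image, hvL]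
        exact ⟨x, by rw [← e1]; exact hxL, rfl⟩
      · rw [vUnion, Finset.mem_union]
        right
        rw [vUp, Finset.mem_image, hvdP]
        refine ⟨x, ?_, rfl⟩
        rw [dotAct, Finset.mem_biUnion]
        exact ⟨q, Finset.mem_filter.mpr ⟨Finset.mem_univ q, e2⟩, hxP⟩

lemma sTab_zero (hm : 0 < m) (hn : 0 < n) :
    sTab (fun p : Fin m => if p.val = 0 then ({1} : Finset ℕ) else ∅)
        (fun q : Fin n => if q.val = 0 then ({1} : Finset ℕ) else ∅)
      = {((⟨0, hm⟩ : Fin m), (⟨0, hn⟩ : Fin n))} := by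
  ext ⟨i, j⟩
  rw [mem_sTab, Finset.mem_singleton, Prod.ext_iff]
  constructor
  · rintro ⟨x, hx1, hx2⟩
    split_ifs at hx1 hx2 with h1 h2
    · exact ⟨Fin.ext h1, Fin.ext h2⟩
    all_goals simp_all
  · rintro ⟨rfl, rfl⟩
    exact ⟨1, by simp, by simp⟩

lemma stepE_id (E : Finset (Fin m × Fin n)) : stepE E id id = E := by
  have h1 : (fun p : Fin m × Fin n => ((id p.1 : Fin m), p.2)) = id := by
    funext p; rfl
  have h2 : (fun p : Fin m × Fin n => (p.1, (id p.2 : Fin n))) = id := by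
    funext p; rfl
  rw [stepE, h1, h2, Finset.image_id, Finset.union_self]

lemma uset_to_reach (hm : 0 < m) (hn : 0 < n) :
    ∀ k (L : Fin m → Finset ℕ) (P : Fin n → Finset ℕ),
    (L, P) ∈ Uset m n k → ReachIn hm hn k (sTab L P) := by
  intro k
  induction k with
  | zero =>
    intro L P hLP
    have hLP' : (L, P) = _ := hLP
    rw [Prod.ext_iff] at hLP'
    obtain ⟨hL, hP⟩ := hLP'
    simp only at hL hP
    subst hL; subst hP
    exact sTab_zero hm hn
  | succ k ih =>
    intro L P hLP
    obtain ⟨L0, P0, h0, f, g, hx⟩ := hLP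
    rw [Prod.ext_iff] at hx
    obtain ⟨hL, hP⟩ := hx
    simp only at hL hP
    subst hL; subst hP
    obtain ⟨h1, h2⟩ := uset_sup hm hn k L0 P0 h0
    exact Or.inr ⟨sTab L0 P0, f, g, ih L0 P0 h0, sTab_step h1 h2 f g⟩

lemma reach_to_uset (hm : 0 < m) (hn : 0 < n) :
    ∀ k (E : Finset (Fin m × Fin n)), ReachIn hm hn k E →
      ∃ (L : Fin m → Finset ℕ) (P : Fin n → Finset ℕ),
        (L, P) ∈ Uset m n k ∧ sTab L P = E := by
  intro k
  induction k with
  | zero =>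
    intro E hE
    have hE' : E = _ := hE
    subst hE'
    exact ⟨_, _, rfl, sTab_zero hm hn⟩
  | succ k ih =>
    intro E hE
    rcases hE with h | ⟨E', f, g, h', rfl⟩
    · obtain ⟨L, P, hU, hs⟩ := ih E h
      obtain ⟨h1, h2⟩ := uset_sup hm hn k L P hU
      refine ⟨_, _, ⟨L, P, hU, id, id, rfl⟩, ?_⟩
      rw [sTab_step h1 h2 id id, hs, stepE_id]
    · obtain ⟨L, P, hU, hs⟩ := ih E' h'
      obtain ⟨h1, h2⟩ := uset_sup hm hn k L P hU
      refine ⟨_, _, ⟨L, P, hU, f, g, rfl⟩, ?_⟩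
      rw [sTab_step h1 h2 f g, hs]

lemma reachIn_mono (hm : 0 < m) (hn : 0 < n) {s t : ℕ} (hst : s ≤ t)
    {E : Finset (Fin m × Fin n)} (h : ReachIn hm hn s E) : ReachIn hm hn t E := by
  induction t with
  | zero => rw [Nat.le_zero] at hst; subst hst; exact h
  | succ t ih =>
    rcases Nat.lt_or_ge s (t+1) with hlt | hge
    · exact Or.inl (ih (by omega))
    · have : s = t + 1 := by omega
      subst this; exact h

lemma reach_iff_reachIn (hm : 0 < m) (hn : 0 < n) (E : Finset (Fin m × Fin n)) :
    Reach hm hn E ↔ ∃ t, ReachIn hm hn t E := by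
  constructor
  · intro h
    induction h with
    | refl => exact ⟨0, rfl⟩
    | tail hab hbc ih =>
      obtain ⟨t, ht⟩ := ih
      obtain ⟨f, g, rfl⟩ := hbc
      exact ⟨t + 1, Or.inr ⟨_, f, g, ht, rfl⟩⟩
  · rintro ⟨t, ht⟩
    induction t generalizing E with
    | zero =>
      have : E = _ := ht
      subst this
      exact Relation.ReflTransGen.refl
    | succ t ih =>
      rcases ht with h | ⟨E', f, g, h', rfl⟩
      · exact ih E h
      · exact Relation.ReflTransGen.tail (ih E' h') ⟨f, g, rfl⟩

lemma reachIn_inv (hm : 0 < m) (hn : 0 < n) :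
    ∀ t (E : Finset (Fin m × Fin n)), ReachIn hm hn t E →
      (∃ j, ((⟨0, hm⟩ : Fin m), j) ∈ E) ∧ (∃ i, (i, (⟨0, hn⟩ : Fin n)) ∈ E) := by
  intro t
  induction t with
  | zero =>
    intro E hE
    have : E = _ := hE
    subst this
    exact ⟨⟨_, Finset.mem_singleton_self _⟩, ⟨_, Finset.mem_singleton_self _⟩⟩
  | succ t ih =>
    intro E hE
    rcases hE with h | ⟨E', f, g, h', rfl⟩
    · exact ih E h
    · obtain ⟨⟨j, hj⟩, ⟨i, hi⟩⟩ := ih E' h'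
      constructor
      · exact ⟨g j, Finset.mem_union_right _ (Finset.mem_image.mpr ⟨(⟨0, hm⟩, j), hj, rfl⟩)⟩
      · exact ⟨f i, Finset.mem_union_left _ (Finset.mem_image.mpr ⟨(i, ⟨0, hn⟩), hi, rfl⟩)⟩

end AuxStmt16b
section AuxStmt16c

lemma card_fin_filter_ne {m : ℕ} (c : Fin m) :
    (Finset.univ.filter (fun i : Fin m => i ≠ c)).card = m - 1 := by
  have h : Finset.univ.filter (fun i : Fin m => i ≠ c) = Finset.univ.erase c := by
    ext i
    simp [Finset.mem_erase]
  rw [h, Finset.card_erase_of_mem (Finset.mem_univ c), Finset.card_univ, Fintype.card_fin]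

lemma card_meet (m n : ℕ) (hm : 0 < m) (hn : 0 < n) :
    ((Finset.univ : Finset (Finset (Fin m × Fin n))).filter
      (fun E => (∃ j, ((⟨0, hm⟩ : Fin m), j) ∈ E) ∧ ∃ i, (i, (⟨0, hn⟩ : Fin n)) ∈ E)).card
    = 2 ^ (m * n - 1) +
        2 ^ ((m - 1) * (n - 1)) * (2 ^ (m - 1) - 1) * (2 ^ (n - 1) - 1) := by
  classical
  set c : Fin m := ⟨0, hm⟩
  set d : Fin n := ⟨0, hn⟩
  set sR : Finset (Fin m × Fin n) := Finset.univ.filter (fun p => p.1 ≠ c) with hsR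
  set sC : Finset (Fin m × Fin n) := Finset.univ.filter (fun p => p.2 ≠ d) with hsC
  set S : Finset (Finset (Fin m × Fin n)) := Finset.univ.filter
      (fun E => (∃ j, (c, j) ∈ E) ∧ ∃ i, (i, d) ∈ E) with hS
  -- product decompositions
  have hsR' : sR = (Finset.univ.filter (fun i : Fin m => i ≠ c)) ×ˢ Finset.univ := by
    ext ⟨a, b⟩; simp [hsR, Finset.mem_product]
  have hsC' : sC = Finset.univ ×ˢ (Finset.univ.filter (fun j : Fin n => j ≠ d)) := by
    ext ⟨a, b⟩; simp [hsC, Finset.mem_product]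
  have hsRC : sR ∩ sC =
      (Finset.univ.filter (fun i : Fin m => i ≠ c)) ×ˢ
        (Finset.univ.filter (fun j : Fin n => j ≠ d)) := by
    ext ⟨a, b⟩; simp [hsR, hsC, Finset.mem_product]
  have cardR : sR.card = (m - 1) * n := by
    rw [hsR', Finset.card_product, card_fin_filter_ne, Finset.card_univ, Fintype.card_fin]
  have cardC : sC.card = m * (n - 1) := by
    rw [hsC', Finset.card_product, card_fin_filter_ne, Finset.card_univ, Fintype.card_fin]
  have cardRC : (sR ∩ sC).card = (m - 1) * (n - 1) := by
    rw [hsRC, Finset.card_product, card_fin_filter_ne, card_fin_filter_ne]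
  -- complement description
  have hpowR : ∀ E : Finset (Fin m × Fin n), E ⊆ sR ↔ ¬ ∃ j, (c, j) ∈ E := by
    intro E
    constructor
    · rintro h ⟨j, hj⟩
      have := h hj
      rw [hsR, Finset.mem_filter] at this
      exact this.2 rfl
    · intro h p hp
      rw [hsR, Finset.mem_filter]
      refine ⟨Finset.mem_univ p, fun hc => h ⟨p.2, ?_⟩⟩
      rwa [← hc, Prod.mk.eta]
  have hpowC : ∀ E : Finset (Fin m × Fin n), E ⊆ sC ↔ ¬ ∃ i, (i, d) ∈ E := by
    intro E
    constructor
    · rintro h ⟨i, hi⟩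
      have := h hi
      rw [hsC, Finset.mem_filter] at this
      exact this.2 rfl
    · intro h p hp
      rw [hsC, Finset.mem_filter]
      refine ⟨Finset.mem_univ p, fun hc => h ⟨p.1, ?_⟩⟩
      rwa [← hc, Prod.mk.eta]
  have hcompl : S = Finset.univ \ (sR.powerset ∪ sC.powerset) := by
    ext E
    rw [hS, Finset.mem_filter, Finset.mem_sdiff, Finset.mem_union,
      Finset.mem_powerset, Finset.mem_powerset, hpowR, hpowC]
    constructor
    · rintro ⟨-, h1, h2⟩
      exact ⟨Finset.mem_univ E, by tauto⟩
    · rintro ⟨-, h⟩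
      push_neg at h
      exact ⟨Finset.mem_univ E, h.1, h.2⟩
  have hpowInter : sR.powerset ∩ sC.powerset = (sR ∩ sC).powerset := by
    ext E
    rw [Finset.mem_inter, Finset.mem_powerset, Finset.mem_powerset, Finset.mem_powerset,
      Finset.subset_inter_iff]
  -- cardinalities
  have hU : (Finset.univ : Finset (Finset (Fin m × Fin n))).card = 2 ^ (m * n) := by
    rw [Finset.card_univ, Fintype.card_finset, Fintype.card_prod, Fintype.card_fin,
      Fintype.card_fin]
  have h1 : S.card + (sR.powerset ∪ sC.powerset).card = 2 ^ (m * n) := by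
    rw [hcompl, Finset.card_sdiff_add_card_eq_card (Finset.subset_univ _), hU]
  have h2 : (sR.powerset ∪ sC.powerset).card + 2 ^ ((m - 1) * (n - 1)) =
      2 ^ ((m - 1) * n) + 2 ^ (m * (n - 1)) := by
    have := Finset.card_union_add_card_inter sR.powerset sC.powerset
    rwa [hpowInter, Finset.card_powerset, Finset.card_powerset, Finset.card_powerset,
      cardR, cardC, cardRC] at this
  -- arithmetic
  obtain ⟨m', rfl⟩ : ∃ m', m = m' + 1 := ⟨m - 1, by omega⟩
  obtain ⟨n', rfl⟩ : ∃ n', n = n' + 1 := ⟨n - 1, by omega⟩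
  obtain ⟨b', hb⟩ : ∃ b', 2 ^ m' = b' + 1 := ⟨2 ^ m' - 1, by
    have := Nat.one_le_two_pow (n := m'); omega⟩
  obtain ⟨c', hc⟩ : ∃ c', 2 ^ n' = c' + 1 := ⟨2 ^ n' - 1, by
    have := Nat.one_le_two_pow (n := n'); omega⟩
  set a := 2 ^ (m' * n') with ha
  have em1 : m' + 1 - 1 = m' := by omega
  have en1 : n' + 1 - 1 = n' := by omega
  have e0 : (m' + 1) * (n' + 1) = (m' * n' + m' + n') + 1 := by ring
  have emn1 : (m' + 1) * (n' + 1) - 1 = m' * n' + m' + n' := by rw [e0]; omega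
  have eR : (m' + 1 - 1) * (n' + 1) = m' * n' + m' := by rw [em1]; ring
  have eC : (m' + 1) * (n' + 1 - 1) = m' * n' + n' := by rw [en1]; ring
  have eI : (m' + 1 - 1) * (n' + 1 - 1) = m' * n' := by rw [em1, en1]
  have pmn : 2 ^ ((m' + 1) * (n' + 1)) = a * (b' + 1) * (c' + 1) * 2 := by
    rw [e0, pow_succ, pow_add, pow_add, ha, hb, hc]
  have pF : 2 ^ ((m' + 1) * (n' + 1) - 1) = a * (b' + 1) * (c' + 1) := by
    rw [emn1, pow_add, pow_add, ha, hb, hc]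
  have pR : 2 ^ ((m' + 1 - 1) * (n' + 1)) = a * (b' + 1) := by
    rw [eR, pow_add, ha, hb]
  have pC : 2 ^ ((m' + 1) * (n' + 1 - 1)) = a * (c' + 1) := by
    rw [eC, pow_add, ha, hc]
  have pI : 2 ^ ((m' + 1 - 1) * (n' + 1 - 1)) = a := by rw [eI]
  have pb : 2 ^ (m' + 1 - 1) - 1 = b' := by rw [em1, hb]; omega
  have pc : 2 ^ (n' + 1 - 1) - 1 = c' := by rw [en1, hc]; omega
  rw [pF, pI, pb, pc]
  rw [pmn] at h1
  rw [pI, pR, pC] at h2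
  have key : (a * (b' + 1) * (c' + 1) + a * b' * c') + (a * (b' + 1) + a * (c' + 1))
      = a * (b' + 1) * (c' + 1) * 2 + a := by ring
  linarith [h1, h2, key]

end AuxStmt16c

theorem stmt16 (m n : ℕ) (hm : 0 < m) (hn : 0 < n) (E : Finset (Fin m × Fin n)) :
    Reach hm hn E ↔
      ∃ k ≤ 2 ^ (m * n - 1) +
          2 ^ ((m - 1) * (n - 1)) * (2 ^ (m - 1) - 1) * (2 ^ (n - 1) - 1),
        ∃ (L : Fin m → Finset ℕ) (P : Fin n → Finset ℕ),
          (L, P) ∈ Uset m n k ∧ sTab L P = E := by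
  classical
  set F := 2 ^ (m * n - 1) +
      2 ^ ((m - 1) * (n - 1)) * (2 ^ (m - 1) - 1) * (2 ^ (n - 1) - 1) with hF
  rw [reach_iff_reachIn]
  constructor
  · rintro ⟨t, ht⟩
    set A : ℕ → Finset (Finset (Fin m × Fin n)) :=
      fun s => Finset.univ.filter (ReachIn hm hn s) with hA
    have hmemA : ∀ s E', E' ∈ A s ↔ ReachIn hm hn s E' := by
      intro s E'; simp [hA]
    have hmono : ∀ s, A s ⊆ A (s + 1) := by
      intro s E' hE'
      rw [hmemA] at hE' ⊢
      exact Or.inl hE'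
    have hchain : ∀ s u, s ≤ u → A s ⊆ A u := by
      intro s u hsu
      induction hsu with
      | refl => exact Finset.Subset.refl _
      | step h ih => exact ih.trans (hmono _)
    have hstabstep : ∀ s, A s = A (s + 1) → ∀ u, A (s + u) = A s := by
      intro s hs u
      induction u with
      | zero => rfl
      | succ u ih =>
        apply Finset.Subset.antisymm
        · intro E' hE'
          have hE'' : ReachIn hm hn ((s + u) + 1) E' := (hmemA _ _).mp hE'
          rcases hE'' with h | ⟨E2, f, g, h2, rfl⟩
          · rw [← ih]; exact (hmemA _ _).mpr h
          · have hmm : E2 ∈ A (s + u) := (hmemA _ _).mpr h2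
            rw [ih] at hmm
            have h2' : ReachIn hm hn s E2 := (hmemA _ _).mp hmm
            have hstep : ReachIn hm hn (s + 1) (stepE E2 f g) :=
              Or.inr ⟨E2, f, g, h2', rfl⟩
            rw [hs]
            exact (hmemA _ _).mpr hstep
        · exact hchain s (s + (u + 1)) (by omega)
    have hgrow : ∀ s, (∀ u ≤ s, A u ≠ A (u + 1)) → s + 1 ≤ (A s).card := by
      intro s
      induction s with
      | zero =>
        intro _
        have h0 : ({((⟨0, hm⟩ : Fin m), (⟨0, hn⟩ : Fin n))} : Finset (Fin m × Fin n)) ∈ A 0 :=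
          (hmemA 0 _).mpr rfl
        exact Finset.card_pos.mpr ⟨_, h0⟩
      | succ s ih =>
        intro h
        have h1 := ih (fun u hu => h u (by omega))
        have hne := h s (by omega)
        have hss : A s ⊂ A (s + 1) := Finset.ssubset_iff_subset_ne.mpr ⟨hmono s, hne⟩
        have := Finset.card_lt_card hss
        omega
    have hbound : ∀ s, (A s).card ≤ F := by
      intro s
      have hsub : A s ⊆ Finset.univ.filter
          (fun E' => (∃ j, ((⟨0, hm⟩ : Fin m), j) ∈ E') ∧
            ∃ i, (i, (⟨0, hn⟩ : Fin n)) ∈ E') := by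
        intro E' hE'
        rw [hmemA] at hE'
        exact Finset.mem_filter.mpr ⟨Finset.mem_univ _, reachIn_inv hm hn s E' hE'⟩
      have := Finset.card_le_card hsub
      rw [card_meet m n hm hn] at this
      rw [hF]
      exact this
    have hex : ∃ s ≤ F, A s = A (s + 1) := by
      by_contra hcon
      push_neg at hcon
      have hg := hgrow F (fun u hu => hcon u hu)
      have hb := hbound F
      omega
    obtain ⟨s, hsF, hstab⟩ := hex
    have hEs : ReachIn hm hn s E := by
      rcases le_or_gt t s with h | h
      · exact reachIn_mono hm hn h ht
      · have hts : A t = A s := by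
          have := hstabstep s hstab (t - s)
          rwa [show s + (t - s) = t by omega] at this
        have hmm : E ∈ A t := (hmemA t E).mpr ht
        rw [hts] at hmm
        exact (hmemA s E).mp hmm
    obtain ⟨L, P, hU, hs'⟩ := reach_to_uset hm hn s E hEs
    exact ⟨s, hsF, L, P, hU, hs'⟩
  · rintro ⟨k, -, L, P, hU, rfl⟩
    exact ⟨k, uset_to_reach hm hn k L P hU⟩
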